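/- Let C be a set of difference constraints over a set X of integer variables that is satisfiable in ℤ, and let G be its constraint graph. Then for variables x, y and d ∈ ℤ, every assignment v : X → ℤ satisfying C also satisfies v(x) − v(y) ≤ d if and only if wSP(x,y) ≤ d, where wSP(x,y) is the minimum weight of a path from x to y in G (+∞ if no such path exists). -/
import Mathlib


namespace UTVPIPaper

/-- `IsPath E u p v`: `p` is a path (a sequence of consecutive weighted edges,
each belonging to the edge set `E`) from vertex `u` to vertex `v`. -/
inductive IsPath {V : Type*} (E : Set (V × V × ℤ)) : V → List (V × V × ℤ) → V → Prop
  | nil (v : V) : IsPath E v [] v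
  | cons {u v w : V} {d : ℤ} {p : List (V × V × ℤ)} :
      (u, v, d) ∈ E → IsPath E v p w → IsPath E u ((u, v, d) :: p) w

/-- The weight of a path: the sum of the weights of its edges. -/
def pweight {V : Type*} (p : List (V × V × ℤ)) : ℤ := (p.map fun e => e.2.2).sum

/-- The graph `E` has no negative weight cycle. -/
def NoNegCycle {V : Type*} (E : Set (V × V × ℤ)) : Prop :=
  ∀ (v : V) (p : List (V × V × ℤ)), IsPath E v p v → 0 ≤ pweight p

/-- `wSP E u v` is the minimum weight of a path from `u` to `v` in `E`
(`⊤` if no path exists). -/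
noncomputable def wSP {V : Type*} (E : Set (V × V × ℤ)) (u v : V) : WithTop ℤ :=
  sInf {w : WithTop ℤ | ∃ p, IsPath E u p v ∧ (pweight p : WithTop ℤ) = w}


lemma pweight_nil {V : Type*} : pweight ([] : List (V × V × ℤ)) = 0 := rfl

lemma pweight_cons {V : Type*} (e : V × V × ℤ) (p : List (V × V × ℤ)) :
    pweight (e :: p) = e.2.2 + pweight p := by simp [pweight]

lemma pweight_append {V : Type*} (p q : List (V × V × ℤ)) :
    pweight (p ++ q) = pweight p + pweight q := by simp [pweight]

lemma IsPath.append {V : Type*} {E : Set (V × V × ℤ)} {u v w : V}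
    {p q : List (V × V × ℤ)} (hp : IsPath E u p v) (hq : IsPath E v q w) :
    IsPath E u (p ++ q) w := by
  induction hp with
  | nil => simpa
  | cons he _ ih => exact IsPath.cons he (ih hq)

lemma IsPath.single {V : Type*} {E : Set (V × V × ℤ)} {u v : V} {d : ℤ}
    (h : (u, v, d) ∈ E) : IsPath E u [(u, v, d)] v :=
  IsPath.cons h (IsPath.nil v)

/-- telescoping bound -/
lemma path_bound {X : Type*} {C : Set (X × X × ℤ)} {v : X → ℤ}
    (hv : ∀ e ∈ C, v e.1 - v e.2.1 ≤ e.2.2) {a b : X} {p : List (X × X × ℤ)}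
    (hp : IsPath C a p b) : v a - v b ≤ pweight p := by
  induction hp with
  | nil => simp [pweight_nil]
  | @cons u m w e p he hp ih =>
      have h1 : v u - v m ≤ e := hv _ he
      rw [pweight_cons]
      show v u - v w ≤ e + pweight p
      omega


/-- Let `C` be a (finite) satisfiable set of difference constraints
(the constraint `(x, y, d)` means `x - y ≤ d`) with constraint graph having an edge
`(x, y, d)` for each constraint `x - y ≤ d` in `C`. Then `C` implies `x - y ≤ d`
iff `wSP(x, y) ≤ d`. -/
theorem diff_implies_iff_wSP_le {X : Type*}
    (C : Set (X × X × ℤ)) (hfin : C.Finite)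
    (hsat : ∃ v : X → ℤ, ∀ e ∈ C, v e.1 - v e.2.1 ≤ e.2.2)
    (x y : X) (d : ℤ) :
    (∀ v : X → ℤ, (∀ e ∈ C, v e.1 - v e.2.1 ≤ e.2.2) → v x - v y ≤ d) ↔
      wSP C x y ≤ (d : WithTop ℤ) := by
  classical
  obtain ⟨v₀, hv₀⟩ := hsat
  set T : X → Set ℤ := fun z => {w | ∃ p, IsPath C x p z ∧ pweight p = w} with hT
  have hbdd : ∀ z, BddBelow (T z) := by
    intro z
    refine ⟨v₀ x - v₀ z, ?_⟩
    rintro w ⟨p, hp, rfl⟩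
    exact path_bound hv₀ hp
  have hSeq : {w : WithTop ℤ | ∃ p, IsPath C x p y ∧ (pweight p : WithTop ℤ) = w}
      = (fun a : ℤ => (a : WithTop ℤ)) '' T y := by
    ext w
    constructor
    · rintro ⟨p, hp, rfl⟩
      exact ⟨pweight p, ⟨p, hp, rfl⟩, rfl⟩
    · rintro ⟨a, ⟨p, hp, rfl⟩, rfl⟩
      exact ⟨p, hp, rfl⟩
  have hwSP : wSP C x y = sInf ((fun a : ℤ => (a : WithTop ℤ)) '' T y) := by
    rw [wSP, hSeq]
  constructor
  · intro h
    by_contra hc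
    have hkey : ∀ w ∈ T y, d < w := by
      intro w hw
      by_contra hle
      push_neg at hle
      apply hc
      rw [hwSP, ← WithTop.coe_sInf' ⟨w, hw⟩ (hbdd y)]
      exact_mod_cast (csInf_le (hbdd y) hw).trans hle
    set sp : X → ℤ := fun z => sInf (T z) with hsp
    have hxT : (0:ℤ) ∈ T x := ⟨[], IsPath.nil x, rfl⟩
    have hspx : sp x = 0 := by
      apply le_antisymm (csInf_le (hbdd x) hxT)
      apply le_csInf ⟨0, hxT⟩
      rintro b ⟨p, hp, rfl⟩
      have := path_bound hv₀ hp
      omega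
    obtain ⟨K₀, hK₀⟩ :=
      (hfin.image (fun e => v₀ e.1 + sp e.2.1 - e.2.2)).bddAbove
    set K := max K₀ (d + v₀ y + 1) with hK
    set v : X → ℤ := fun z => if (T z).Nonempty then -sp z else v₀ z - K with hvdef
    have hfeas : ∀ e ∈ C, v e.1 - v e.2.1 ≤ e.2.2 := by
      rintro ⟨a, b, w⟩ he
      show v a - v b ≤ w
      by_cases ha : (T a).Nonempty
      · obtain ⟨pa, hpa, hpaw⟩ := Int.csInf_mem ha (hbdd a)
        have hmem : sp a + w ∈ T b := by
          refine ⟨pa ++ [(a,b,w)], hpa.append (IsPath.single he), ?_⟩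
          rw [pweight_append, hpaw, pweight_cons, pweight_nil]
          show sInf (T a) + (w + 0) = sp a + w
          simp [hsp]
        have hb : (T b).Nonempty := ⟨_, hmem⟩
        have hsb : sp b ≤ sp a + w := csInf_le (hbdd b) hmem
        simp only [hvdef, if_pos ha, if_pos hb]
        omega
      · by_cases hb : (T b).Nonempty
        · have h1 : v₀ a + sp b - w ≤ K₀ :=
            hK₀ (Set.mem_image_of_mem (fun e => v₀ e.1 + sp e.2.1 - e.2.2) he)
          have h2 : K₀ ≤ K := le_max_left _ _
          simp only [hvdef, if_neg ha, if_pos hb]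
          omega
        · have h1 : v₀ a - v₀ b ≤ w := hv₀ (a,b,w) he
          simp only [hvdef, if_neg ha, if_neg hb]
          omega
    have hxy := h v hfeas
    have hvx : v x = 0 := by
      have hne : (T x).Nonempty := ⟨0, hxT⟩
      simp only [hvdef, if_pos hne, hspx, neg_zero]
    by_cases hy : (T y).Nonempty
    · have hvy : v y = -sp y := by simp only [hvdef, if_pos hy]
      have hmem : sp y ∈ T y := Int.csInf_mem hy (hbdd y)
      have := hkey _ hmem
      omega
    · have hvy : v y = v₀ y - K := by simp only [hvdef, if_neg hy]
      have h2 : d + v₀ y + 1 ≤ K := le_max_right _ _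
      omega
  · intro h v hv
    by_cases hy : (T y).Nonempty
    · rw [hwSP, ← WithTop.coe_sInf' hy (hbdd y)] at h
      have hle : sInf (T y) ≤ d := by exact_mod_cast h
      obtain ⟨p, hp, hw⟩ := Int.csInf_mem hy (hbdd y)
      have := path_bound hv hp
      omega
    · rw [hwSP, Set.not_nonempty_iff_eq_empty.mp hy] at h
      simp at h


end UTVPIPaper
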